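/- Let c > 0, θ > 0 and m_k, m_l ∈ (0,1], and for n ∈ ℕ set n_k = ⌈m_k·n⌉, n_l = ⌈m_l·n⌉, k_n = ⌈θ·√n⌉, and s_j = φ⁻¹(j/n_l). Then (1/k_n)·max{ | n_k·f(φ⁻¹((j+m)/n_l)) − n_k·f(s_j) − (n_k·f'(s_j)/(n_l·φ'(s_j)))·m | : 0 ≤ j ≤ n_l, m ∈ ℤ, |m| ≤ c·k_n, 0 ≤ j+m ≤ n_l } → 0 as n → ∞. -/

import Mathlib

open Set

private lemma seg_abs {x y t : ℝ} (ht : t ∈ segment ℝ x y) : |t - x| ≤ |y - x| := by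
  obtain ⟨a, b, ha, hb, hab, rfl⟩ := ht
  have h1 : a • x + b • y - x = b * (y - x) := by
    simp only [smul_eq_mul]
    linear_combination x * hab
  rw [h1, abs_mul, abs_of_nonneg hb]
  have hb1 : b ≤ 1 := by linarith
  exact mul_le_of_le_one_left (abs_nonneg _) hb1

private lemma taylor_bd (f f' : ℝ → ℝ)
    (hf : ∀ t ∈ Icc (0:ℝ) 1, HasDerivWithinAt f (f' t) (Icc 0 1) t)
    {x y : ℝ} (hx : x ∈ Icc (0:ℝ) 1) (hy : y ∈ Icc (0:ℝ) 1) {C : ℝ}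
    (hC : ∀ t ∈ segment ℝ x y, |f' t - f' x| ≤ C) :
    |f y - f x - f' x * (y - x)| ≤ C * |y - x| := by
  have hsub : segment ℝ x y ⊆ Icc (0:ℝ) 1 := (convex_Icc 0 1).segment_subset hx hy
  have hlin : ∀ t ∈ segment ℝ x y,
      HasDerivWithinAt (fun u => f u - f' x * u) (f' t - f' x) (segment ℝ x y) t := by
    intro t ht
    have h1 : HasDerivWithinAt (fun u : ℝ => f' x * u) (f' x) (segment ℝ x y) t := by
      simpa using (hasDerivWithinAt_id t (segment ℝ x y)).const_mul (f' x)
    exact ((hf t (hsub ht)).mono hsub).sub h1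
  have key := Convex.norm_image_sub_le_of_norm_hasDerivWithin_le hlin
    (fun t ht => by simpa [Real.norm_eq_abs] using hC t ht)
    (convex_segment x y) (left_mem_segment ℝ x y) (right_mem_segment ℝ x y)
  have heq : f y - f' x * y - (f x - f' x * x) = f y - f x - f' x * (y - x) := by ring
  simpa [Real.norm_eq_abs, heq] using key

private lemma incr_lb (M : ℝ) (φ φ' : ℝ → ℝ)
    (hφderiv : ∀ x ∈ Icc (0:ℝ) 1, HasDerivWithinAt φ (φ' x) (Icc 0 1) x)
    (hφlb : ∀ x ∈ Icc (0:ℝ) 1, M⁻¹ < φ' x) :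
    ∀ x ∈ Icc (0:ℝ) 1, ∀ y ∈ Icc (0:ℝ) 1, x ≤ y → M⁻¹ * (y - x) ≤ φ y - φ x := by
  have hcont : ContinuousOn φ (Icc 0 1) := fun t ht => (hφderiv t ht).continuousWithinAt
  have hderivAt : ∀ t ∈ interior (Icc (0:ℝ) 1), HasDerivAt φ (φ' t) t := by
    intro t ht
    rw [interior_Icc] at ht
    exact (hφderiv t (Ioo_subset_Icc_self ht)).hasDerivAt (Icc_mem_nhds ht.1 ht.2)
  exact (convex_Icc 0 1).mul_sub_le_image_sub_of_le_deriv hcont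
    (fun t ht => ((hderivAt t ht).differentiableAt).differentiableWithinAt)
    (fun t ht => by
      rw [(hderivAt t ht).deriv]
      refine (hφlb t ?_).le
      rw [interior_Icc] at ht
      exact Ioo_subset_Icc_self ht)

set_option maxHeartbeats 1000000 in
theorem stmt_6 (M c θ mk ml : ℝ) (hM : 1 < M) (hc : 0 < c) (hθ : 0 < θ)
    (hmk : mk ∈ Set.Ioc (0:ℝ) 1) (hml : ml ∈ Set.Ioc (0:ℝ) 1)
    (f f' φ φ' ψφ : ℝ → ℝ)
    (hfmono : StrictMonoOn f (Icc 0 1)) (hφmono : StrictMonoOn φ (Icc 0 1))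
    (hfbij : Set.BijOn f (Icc 0 1) (Icc 0 1)) (hφbij : Set.BijOn φ (Icc 0 1) (Icc 0 1))
    (hf0 : f 0 = 0) (hf1 : f 1 = 1) (hφ0 : φ 0 = 0) (hφ1 : φ 1 = 1)
    (hfderiv : ∀ x ∈ Icc (0:ℝ) 1, HasDerivWithinAt f (f' x) (Icc 0 1) x)
    (hφderiv : ∀ x ∈ Icc (0:ℝ) 1, HasDerivWithinAt φ (φ' x) (Icc 0 1) x)
    (hfcont : ContinuousOn f' (Icc 0 1)) (hφcont : ContinuousOn φ' (Icc 0 1))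
    (hflb : ∀ x ∈ Icc (0:ℝ) 1, M⁻¹ < f' x) (hfub : ∀ x ∈ Icc (0:ℝ) 1, f' x < M)
    (hφlb : ∀ x ∈ Icc (0:ℝ) 1, M⁻¹ < φ' x) (hφub : ∀ x ∈ Icc (0:ℝ) 1, φ' x < M)
    (hinv : ∀ x ∈ Icc (0:ℝ) 1, ψφ x ∈ Icc (0:ℝ) 1 ∧ φ (ψφ x) = x) :
    ∀ ε > 0, ∃ N : ℕ, ∀ n : ℕ, N ≤ n →
      ∀ j : ℕ, j ≤ ⌈ml * n⌉₊ → ∀ m : ℤ,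
        |(m : ℝ)| ≤ c * (⌈θ * Real.sqrt n⌉₊ : ℝ) →
        0 ≤ (j : ℤ) + m → (j : ℤ) + m ≤ (⌈ml * n⌉₊ : ℤ) →
        (1 / (⌈θ * Real.sqrt n⌉₊ : ℝ)) *
          |(⌈mk * n⌉₊ : ℝ) * f (ψφ ((((j : ℤ) + m : ℤ) : ℝ) / (⌈ml * n⌉₊ : ℝ)))
            - (⌈mk * n⌉₊ : ℝ) * f (ψφ ((j : ℝ) / (⌈ml * n⌉₊ : ℝ)))
            - ((⌈mk * n⌉₊ : ℝ) * f' (ψφ ((j : ℝ) / (⌈ml * n⌉₊ : ℝ)))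
                / ((⌈ml * n⌉₊ : ℝ) * φ' (ψφ ((j : ℝ) / (⌈ml * n⌉₊ : ℝ))))) * (m : ℝ)| < ε := by
  intro ε hε
  have hM0 : (0:ℝ) < M := lt_trans one_pos hM
  have hMinv : (0:ℝ) < M⁻¹ := inv_pos.mpr hM0
  have hml0 : (0:ℝ) < ml := hml.1
  have hM2 : (0:ℝ) < 1 + M ^ 2 := by positivity
  set ε' : ℝ := ε * ml / (4 * M * c * (1 + M ^ 2)) with hε'def
  have hε' : 0 < ε' :=
    div_pos (mul_pos hε hml0)
      (mul_pos (mul_pos (mul_pos four_pos hM0) hc) hM2)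
  -- uniform continuity of f' and φ'
  have hfu := isCompact_Icc.uniformContinuousOn_of_continuous hfcont
  have hφu := isCompact_Icc.uniformContinuousOn_of_continuous hφcont
  rw [Metric.uniformContinuousOn_iff] at hfu hφu
  obtain ⟨δ₁, hδ₁, hf'u⟩ := hfu ε' hε'
  obtain ⟨δ₂, hδ₂, hφ'u⟩ := hφu ε' hε'
  set δ : ℝ := min δ₁ δ₂ with hδdef
  have hδ : 0 < δ := lt_min hδ₁ hδ₂
  set K : ℝ := (θ + 1) * M * c / (δ * ml) with hKdef
  obtain ⟨N₀, hN₀⟩ := exists_nat_gt (K ^ 2)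
  refine ⟨max N₀ 1, ?_⟩
  intro n hn j hj m hm hjm1 hjm2
  have hn1 : 1 ≤ n := le_trans (le_max_right _ _) hn
  have hnN₀ : N₀ ≤ n := le_trans (le_max_left _ _) hn
  have hnR : (1:ℝ) ≤ (n:ℝ) := by exact_mod_cast hn1
  have hn0 : (0:ℝ) < (n:ℝ) := lt_of_lt_of_le one_pos hnR
  set nl : ℝ := (⌈ml * n⌉₊ : ℝ) with hnldef
  set nk : ℝ := (⌈mk * n⌉₊ : ℝ) with hnkdef
  set kn : ℝ := (⌈θ * Real.sqrt n⌉₊ : ℝ) with hkndef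
  have hsq1 : (1:ℝ) ≤ Real.sqrt n := by
    have := Real.sqrt_le_sqrt hnR
    rwa [Real.sqrt_one] at this
  have hsq0 : (0:ℝ) < Real.sqrt n := lt_of_lt_of_le one_pos hsq1
  have hnl0 : (0:ℝ) < nl := by
    rw [hnldef]
    exact_mod_cast Nat.ceil_pos.mpr (mul_pos hml0 hn0)
  have hkn0 : (0:ℝ) < kn := by
    rw [hkndef]
    exact_mod_cast Nat.ceil_pos.mpr (mul_pos hθ hsq0)
  have hnlge : ml * n ≤ nl := Nat.le_ceil _
  have hknle : kn ≤ θ * Real.sqrt n + 1 :=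
    (Nat.ceil_lt_add_one (mul_pos hθ hsq0).le).le
  have hnkle : nk ≤ 2 * n := by
    have h1 : nk < mk * n + 1 := Nat.ceil_lt_add_one (mul_nonneg hmk.1.le hn0.le)
    have h2 : mk * n ≤ 1 * n := mul_le_mul_of_nonneg_right hmk.2 hn0.le
    linarith
  -- √n > K
  have hKsqrt : K < Real.sqrt n := by
    rcases le_or_gt K 0 with h | h
    · exact lt_of_le_of_lt h hsq0
    · rw [show Real.sqrt (n:ℝ) = Real.sqrt (n:ℝ) from rfl]
      have h2 : K ^ 2 < (n:ℝ) := lt_of_lt_of_le hN₀ (by exact_mod_cast hnN₀)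
      exact Real.lt_sqrt_of_sq_lt h2
  have hnsq : Real.sqrt n * Real.sqrt n = (n:ℝ) := Real.mul_self_sqrt hn0.le
  have hsmall : M * c * kn / nl < δ := by
    have hδml : (0:ℝ) < δ * ml := mul_pos hδ hml0
    have hKe : K * (δ * ml) = (θ + 1) * M * c := by
      rw [hKdef]; field_simp
    have hK1 : (θ + 1) * M * c < δ * ml * Real.sqrt n := by
      have h := mul_lt_mul_of_pos_right hKsqrt hδml
      rw [hKe] at h
      linarith
    have hkn2 : kn ≤ (θ + 1) * Real.sqrt n := by
      have : (θ + 1) * Real.sqrt n = θ * Real.sqrt n + Real.sqrt n := by ring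
      linarith
    have a1 : M * c * kn ≤ M * c * ((θ + 1) * Real.sqrt n) :=
      mul_le_mul_of_nonneg_left hkn2 (mul_nonneg hM0.le hc.le)
    have a2 : (θ + 1) * M * c * Real.sqrt n < δ * ml * Real.sqrt n * Real.sqrt n :=
      mul_lt_mul_of_pos_right hK1 hsq0
    have a3 : δ * ml * Real.sqrt n * Real.sqrt n = δ * (ml * n) := by
      calc δ * ml * Real.sqrt n * Real.sqrt n
          = δ * ml * (Real.sqrt n * Real.sqrt n) := by ring
        _ = δ * (ml * n) := by rw [hnsq]; ring
    have a4 : δ * (ml * n) ≤ δ * nl := mul_le_mul_of_nonneg_left hnlge hδ.le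
    have h5 : M * c * kn < δ * nl :=
      calc M * c * kn ≤ M * c * ((θ + 1) * Real.sqrt n) := a1
        _ = (θ + 1) * M * c * Real.sqrt n := by ring
        _ < δ * ml * Real.sqrt n * Real.sqrt n := a2
        _ = δ * (ml * n) := a3
        _ ≤ δ * nl := a4
    rw [div_lt_iff₀ hnl0]
    exact h5
  -- the grid points
  have hjle : (j:ℝ) ≤ nl := by
    rw [hnldef]; exact_mod_cast hj
  have hjmem : (j:ℝ) / nl ∈ Icc (0:ℝ) 1 := by
    constructor
    · exact div_nonneg (Nat.cast_nonneg _) hnl0.le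
    · rw [div_le_one hnl0]; exact hjle
  have hjm_cast : ((((j:ℤ) + m : ℤ)):ℝ) = (j:ℝ) + (m:ℝ) := by push_cast; ring
  have hjmle : (j:ℝ) + (m:ℝ) ≤ nl := by
    have h : (((j:ℤ) + m : ℤ):ℝ) ≤ ((⌈ml * n⌉₊ : ℤ) : ℝ) := by exact_mod_cast hjm2
    rw [hjm_cast] at h
    rw [hnldef]
    simpa using h
  have hjmge : (0:ℝ) ≤ (j:ℝ) + (m:ℝ) := by
    have h : ((0:ℤ):ℝ) ≤ (((j:ℤ) + m : ℤ):ℝ) := by exact_mod_cast hjm1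
    rw [hjm_cast] at h
    simpa using h
  have hymem' : ((j:ℝ) + (m:ℝ)) / nl ∈ Icc (0:ℝ) 1 := by
    constructor
    · exact div_nonneg hjmge hnl0.le
    · rw [div_le_one hnl0]; exact hjmle
  rw [hjm_cast]
  set x : ℝ := ψφ ((j:ℝ) / nl) with hxdef
  set y : ℝ := ψφ (((j:ℝ) + (m:ℝ)) / nl) with hydef
  obtain ⟨hxmem, hφx⟩ := hinv _ hjmem
  obtain ⟨hymem, hφy⟩ := hinv _ hymem'
  have hφ'x0 : (0:ℝ) < φ' x := lt_trans hMinv (hφlb x hxmem)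
  have hf'x0 : (0:ℝ) < f' x := lt_trans hMinv (hflb x hxmem)
  -- Lipschitz bound on |y - x|
  have hlip := incr_lb M φ φ' hφderiv hφlb
  have hφdiff : φ y - φ x = (m:ℝ) / nl := by
    rw [hφy, hφx]
    field_simp
    ring
  have habsdiv : (m:ℝ) / nl ≤ |(m:ℝ)| / nl := by
    gcongr
    exact le_abs_self _
  have hnegdiv : -((m:ℝ) / nl) ≤ |(m:ℝ)| / nl := by
    rw [← neg_div]
    gcongr
    exact neg_le_abs _
  have hyx : |y - x| ≤ M * (|(m:ℝ)| / nl) := by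
    rcases le_total x y with h | h
    · have h1 := hlip x hxmem y hymem h
      rw [hφdiff] at h1
      rw [abs_of_nonneg (sub_nonneg.mpr h)]
      have h3 : M⁻¹ * (y - x) ≤ |(m:ℝ)| / nl := le_trans h1 habsdiv
      calc y - x = M * (M⁻¹ * (y - x)) := by field_simp
        _ ≤ M * (|(m:ℝ)| / nl) := mul_le_mul_of_nonneg_left h3 hM0.le
    · have h1 := hlip y hymem x hxmem h
      have h1' : M⁻¹ * (x - y) ≤ -((m:ℝ) / nl) := by
        rw [← hφdiff]; linarith
      rw [abs_of_nonpos (sub_nonpos.mpr h)]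
      have h3 : M⁻¹ * (x - y) ≤ |(m:ℝ)| / nl := le_trans h1' hnegdiv
      calc -(y - x) = M * (M⁻¹ * (x - y)) := by field_simp; ring
        _ ≤ M * (|(m:ℝ)| / nl) := mul_le_mul_of_nonneg_left h3 hM0.le
  -- |y - x| is small
  have hmkn : |(m:ℝ)| / nl ≤ c * kn / nl := by gcongr
  have hyx2 : |y - x| ≤ M * c * kn / nl := by
    calc |y - x| ≤ M * (|(m:ℝ)| / nl) := hyx
      _ ≤ M * (c * kn / nl) := mul_le_mul_of_nonneg_left hmkn hM0.le
      _ = M * c * kn / nl := by ring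
  have hyxδ : |y - x| < δ := lt_of_le_of_lt hyx2 hsmall
  -- Taylor bounds
  have hCf : ∀ t ∈ segment ℝ x y, |f' t - f' x| ≤ ε' := by
    intro t ht
    have htmem : t ∈ Icc (0:ℝ) 1 := (convex_Icc 0 1).segment_subset hxmem hymem ht
    have hdist : dist t x < δ₁ := by
      rw [Real.dist_eq]
      exact lt_of_le_of_lt (seg_abs ht) (lt_of_lt_of_le hyxδ (min_le_left _ _))
    have h := hf'u t htmem x hxmem hdist
    rw [Real.dist_eq] at h
    exact h.le
  have hCφ : ∀ t ∈ segment ℝ x y, |φ' t - φ' x| ≤ ε' := by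
    intro t ht
    have htmem : t ∈ Icc (0:ℝ) 1 := (convex_Icc 0 1).segment_subset hxmem hymem ht
    have hdist : dist t x < δ₂ := by
      rw [Real.dist_eq]
      exact lt_of_le_of_lt (seg_abs ht) (lt_of_lt_of_le hyxδ (min_le_right _ _))
    have h := hφ'u t htmem x hxmem hdist
    rw [Real.dist_eq] at h
    exact h.le
  have hTf : |f y - f x - f' x * (y - x)| ≤ ε' * |y - x| :=
    taylor_bd f f' hfderiv hxmem hymem hCf
  have hTφ : |φ y - φ x - φ' x * (y - x)| ≤ ε' * |y - x| :=
    taylor_bd φ φ' hφderiv hxmem hymem hCφ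
  -- ratio bound
  have hratio : |f' x / φ' x| ≤ M ^ 2 := by
    rw [abs_of_nonneg (div_nonneg hf'x0.le hφ'x0.le), div_le_iff₀ hφ'x0]
    have hMsq : (0:ℝ) < M ^ 2 := by positivity
    have h1 : M ^ 2 * M⁻¹ < M ^ 2 * φ' x := mul_lt_mul_of_pos_left (hφlb x hxmem) hMsq
    have h2 : M ^ 2 * M⁻¹ = M := by rw [sq]; field_simp
    linarith [hfub x hxmem]
  -- rewrite the target expression
  have hrw : nk * f y - nk * f x - nk * f' x / (nl * φ' x) * (m:ℝ)
      = nk * ((f y - f x - f' x * (y - x))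
          - f' x / φ' x * (φ y - φ x - φ' x * (y - x))) := by
    have hm_over : (m:ℝ) = (φ y - φ x) * nl := by
      rw [hφdiff]
      field_simp
    rw [hm_over]
    field_simp
    ring
  -- bound the inner term
  have hinner : |(f y - f x - f' x * (y - x))
      - f' x / φ' x * (φ y - φ x - φ' x * (y - x))| ≤ ε' * (1 + M ^ 2) * |y - x| := by
    calc |(f y - f x - f' x * (y - x)) - f' x / φ' x * (φ y - φ x - φ' x * (y - x))|
        ≤ |f y - f x - f' x * (y - x)| + |f' x / φ' x * (φ y - φ x - φ' x * (y - x))| :=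
          abs_sub _ _
      _ ≤ ε' * |y - x| + M ^ 2 * (ε' * |y - x|) := by
          refine add_le_add hTf ?_
          rw [abs_mul]
          exact mul_le_mul hratio hTφ (abs_nonneg _) (by positivity)
      _ = ε' * (1 + M ^ 2) * |y - x| := by ring
  have hnk0 : (0:ℝ) ≤ nk := by rw [hnkdef]; exact Nat.cast_nonneg _
  rw [hrw, abs_mul, abs_of_nonneg hnk0]
  have hB0 : (0:ℝ) ≤ ε' * (1 + M ^ 2) := mul_nonneg hε'.le hM2.le
  have hfinal : 1 / kn * (nk * (ε' * (1 + M ^ 2) * (M * c * kn / nl))) ≤ ε / 2 := by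
    have h1 : 1 / kn * (nk * (ε' * (1 + M ^ 2) * (M * c * kn / nl)))
        = ε' * (1 + M ^ 2) * M * c * (nk / nl) := by
      field_simp
    have h2 : nk / nl ≤ 2 / ml := by
      rw [div_le_div_iff₀ hnl0 hml0]
      have h2a : nk * ml ≤ 2 * n * ml := mul_le_mul_of_nonneg_right hnkle hml0.le
      have h2b : 2 * (ml * n) ≤ 2 * nl := by linarith
      linarith
    rw [h1]
    have h3 : ε' * (1 + M ^ 2) * M * c * (nk / nl) ≤ ε' * (1 + M ^ 2) * M * c * (2 / ml) :=
      mul_le_mul_of_nonneg_left h2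
        (mul_nonneg (mul_nonneg hB0 hM0.le) hc.le)
    have h4 : ε' * (1 + M ^ 2) * M * c * (2 / ml) = ε / 2 := by
      rw [hε'def]
      field_simp
      ring
    linarith
  have hchain : 1 / kn * (nk * |(f y - f x - f' x * (y - x))
      - f' x / φ' x * (φ y - φ x - φ' x * (y - x))|)
      ≤ 1 / kn * (nk * (ε' * (1 + M ^ 2) * (M * c * kn / nl))) := by
    have hi2 : |(f y - f x - f' x * (y - x))
        - f' x / φ' x * (φ y - φ x - φ' x * (y - x))|
        ≤ ε' * (1 + M ^ 2) * (M * c * kn / nl) :=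
      le_trans hinner (mul_le_mul_of_nonneg_left hyx2 hB0)
    have h6 := mul_le_mul_of_nonneg_left hi2 hnk0
    exact mul_le_mul_of_nonneg_left h6 (one_div_nonneg.mpr hkn0.le)
  have hhalf : ε / 2 < ε := by linarith
  exact lt_of_le_of_lt (le_trans hchain hfinal) hhalf
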